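/- If every edge of a graph G joins vertices in the same layer or in consecutive layers of a layering V_0,...,V_p, and each layer contains at most ℓ vertices of G, then G has a track layout with at most 2ℓ tracks in which every edge has span at most 2ℓ - 1, where the tracks are obtained by ordering the vertices of each layer arbitrarily as tracks (i,1),...,(i,ℓ) for layer i (with each track containing at most one vertex), and tracks ordered lexicographically by (i,k). -/

import Mathlib

/-- A `t`-track layout of `G`: `track` is a proper colouring with colours `< t`,
`ord` induces a total order on each track (injective within each track),
and there are no X-crossings. -/
def IsTrackLayout {V : Type*} (G : SimpleGraph V) (track ord : V → ℕ) (t : ℕ) : Prop :=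
  (∀ v, track v < t) ∧
  (∀ ⦃v w⦄, G.Adj v w → track v ≠ track w) ∧
  (∀ ⦃v w⦄, track v = track w → ord v = ord w → v = w) ∧
  (∀ ⦃v w x y⦄, G.Adj v w → G.Adj x y → track v = track x → track w = track y →
      track v ≠ track w → ord v < ord x → ord y < ord w → False)

/-- If every edge of `G` joins vertices in the same layer or in consecutive
layers of a layering `V_0, …, V_p` (given by `layer : V → ℕ`), and each layer
contains at most `ℓ` vertices, then ordering the vertices of layer `i`
arbitrarily into singleton tracks `(i,0),…,(i,ℓ-1)`, with tracks ordered
lexicographically (track `(i,kk)` encoded as `ℓ * i + kk`), yields a track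
layout in which each track contains at most one vertex and every edge has
span at most `2ℓ - 1`. -/
theorem track_layout_of_layering {V : Type*} [Fintype V] [DecidableEq V]
    (G : SimpleGraph V) (ℓ p : ℕ) (hℓ : 1 ≤ ℓ) (layer : V → ℕ)
    (hp : ∀ v, layer v ≤ p)
    (hlayering : ∀ ⦃v w⦄, G.Adj v w → layer v ≤ layer w + 1 ∧ layer w ≤ layer v + 1)
    (hsize : ∀ i : ℕ, (Finset.univ.filter (fun v => layer v = i)).card ≤ ℓ) :
    ∃ τ : V → ℕ,
      -- each vertex of layer `i` goes to one of the tracks `(i,0),…,(i,ℓ-1)`: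
      (∀ v, ∃ kk, kk < ℓ ∧ τ v = ℓ * layer v + kk) ∧
      -- each track contains at most one vertex:
      Function.Injective τ ∧
      -- this is a track layout (with the lexicographic list of tracks):
      IsTrackLayout G τ (fun _ => 0) (ℓ * (p + 1)) ∧
      -- every edge has span at most `2ℓ - 1`:
      (∀ ⦃v w⦄, G.Adj v w → |(τ v : ℤ) - (τ w : ℤ)| ≤ 2 * ℓ - 1) := by
  classical
  set idx : V → ℕ := fun v =>
    (Finset.univ.filter (fun w => layer w = layer v)).toList.idxOf v with hidx
  have hmem : ∀ v, v ∈ (Finset.univ.filter (fun w => layer w = layer v)).toList := by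
    intro v
    simp [Finset.mem_toList]
  have hidxlt : ∀ v, idx v < ℓ := by
    intro v
    have h1 : idx v < (Finset.univ.filter (fun w => layer w = layer v)).toList.length :=
      List.idxOf_lt_length_iff.mpr (hmem v)
    have h2 := hsize (layer v)
    rw [Finset.length_toList] at h1
    exact h1.trans_le h2
  have hidxinj : ∀ v w, layer v = layer w → idx v = idx w → v = w := by
    intro v w hl hi
    have hmw : w ∈ (Finset.univ.filter (fun x => layer x = layer v)).toList := by
      rw [hl]; exact hmem w
    have hv := List.idxOf_get (List.idxOf_lt_length_iff.mpr (hmem v))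
    have hw := List.idxOf_get (List.idxOf_lt_length_iff.mpr hmw)
    have : idx w = (Finset.univ.filter (fun x => layer x = layer v)).toList.idxOf w := by
      simp only [hidx, hl]
    rw [← hv, ← hw]
    congr 1
    simp [hidx, this, hi] at *
    omega
  set τ : V → ℕ := fun v => ℓ * layer v + idx v with hτ
  have hinj : Function.Injective τ := by
    intro v w h
    simp only [hτ] at h
    have h1 : layer v = layer w := by
      rcases Nat.lt_trichotomy (layer v) (layer w) with hc | hc | hc
      · nlinarith [hidxlt v, hidxlt w, Nat.mul_le_mul_left ℓ (Nat.succ_le_of_lt hc)]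
      · exact hc
      · nlinarith [hidxlt v, hidxlt w, Nat.mul_le_mul_left ℓ (Nat.succ_le_of_lt hc)]
    refine hidxinj v w h1 ?_
    rw [h1] at h
    omega
  refine ⟨τ, fun v => ⟨idx v, hidxlt v, rfl⟩, hinj, ⟨?_, ?_, ?_, ?_⟩, ?_⟩
  · intro v
    have h1 : layer v ≤ p := hp v
    have h2 : idx v < ℓ := hidxlt v
    have : ℓ * layer v + idx v < ℓ * (p + 1) := by nlinarith [Nat.mul_le_mul_left ℓ h1]
    simpa [hτ] using this
  · intro v w hvw heq
    exact G.ne_of_adj hvw (hinj heq)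
  · intro v w heq _
    exact hinj heq
  · intro v w x y _ _ _ _ _ h
    exact absurd h (lt_irrefl 0)
  · intro v w hvw
    obtain ⟨h1, h2⟩ := hlayering hvw
    have kv := hidxlt v
    have kw := hidxlt w
    rw [abs_le]
    have e1 : (ℓ : ℤ) * layer v ≤ ℓ * (layer w + 1) := by
      exact_mod_cast Nat.mul_le_mul_left ℓ h1
    have e2 : (ℓ : ℤ) * layer w ≤ ℓ * (layer v + 1) := by
      exact_mod_cast Nat.mul_le_mul_left ℓ h2
    have kv' : (idx v : ℤ) < ℓ := by exact_mod_cast kv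
    have kw' : (idx w : ℤ) < ℓ := by exact_mod_cast kw
    have hl1 : (1 : ℤ) ≤ ℓ := by exact_mod_cast hℓ
    constructor <;> · simp only [hτ]; push_cast; nlinarith [Int.natCast_nonneg (idx v), Int.natCast_nonneg (idx w)]
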